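/- Let K = F_q, β a generator of the cyclic group F_q^*, k ∈ N, and r = ord(β^k) (so r divides q-1). Let X ⊆ P^1 be the set parameterized by the monomials y_1^{q-1} and y_2^{q-1}y_3^k. Then I(X) = (t_1^{r+1}t_2 - t_1t_2^{r+1}). -/

import Mathlib

open MvPolynomial

/-- Evaluation of the monomials `y^{v_1},…,y^{v_s}` at a point `x ∈ K^n`. -/
noncomputable def monEval {K : Type} [Field K] {n s : ℕ} (v : Fin s → Fin n → ℕ)
    (x : Fin n → K) : Fin s → K := fun i => ∏ j, x j ^ v i j

/-- The subset of `ℙ^{s-1}` parameterized by the monomials `y^{v_1},…,y^{v_s}`. -/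
noncomputable def paramSet {K : Type} [Field K] {n s : ℕ} (v : Fin s → Fin n → ℕ) :
    Set (Projectivization K (Fin s → K)) :=
  { p | ∃ (x : Fin n → K) (h : monEval v x ≠ 0), p = Projectivization.mk K (monEval v x) h }

/-- The vanishing ideal of a set of projective points: the ideal generated by the
homogeneous polynomials vanishing at all points of the set. -/
noncomputable def vanishIdeal {K : Type} [Field K] {s : ℕ}
    (X : Set (Projectivization K (Fin s → K))) : Ideal (MvPolynomial (Fin s) K) :=
  Ideal.span { f | (∃ d, f.IsHomogeneous d) ∧ ∀ p ∈ X, eval p.rep f = 0 }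

/-- `supp(y^{v_i}) ⊄ supp(y^{v_j})` for all `i ≠ j`. -/
def clutterType {n s : ℕ} (v : Fin s → Fin n → ℕ) : Prop :=
  ∀ i j : Fin s, i ≠ j → ¬ ({k | v i k ≠ 0} ⊆ {k | v j k ≠ 0})

namespace Stmt14Aux
variable {K : Type} [Field K]

lemma supp_deg {g : MvPolynomial (Fin 2) K} {d : ℕ} (hg : g.IsHomogeneous d)
    {m : Fin 2 →₀ ℕ} (hm : m ∈ g.support) : m 0 + m 1 = d := by
  have h := hg (MvPolynomial.mem_support_iff.mp hm)
  have h : Finsupp.degree m = d := by rw [Finsupp.degree_eq_weight_one]; exact h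
  rw [← h, Finsupp.degree, ← Fin.sum_univ_two (f := fun i => m i)]
  exact (Finset.sum_subset (Finset.subset_univ _) (by
    intro i _ hi; simpa using Finsupp.notMem_support_iff.mp hi)).symm

lemma eval_monomial_two (w : Fin 2 → K) (m : Fin 2 →₀ ℕ) (c : K) :
    eval w (monomial m c) = c * w 0 ^ m 0 * w 1 ^ m 1 := by
  rw [eval_monomial, Finsupp.prod_pow, Fin.prod_univ_two, mul_assoc]

lemma eval_smul_homog {g : MvPolynomial (Fin 2) K} {d : ℕ} (hg : g.IsHomogeneous d)
    (c : K) (w : Fin 2 → K) : eval (c • w) g = c ^ d * eval w g := by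
  conv_lhs => rw [g.as_sum]
  conv_rhs => rw [g.as_sum]
  rw [map_sum, map_sum, Finset.mul_sum]
  refine Finset.sum_congr rfl fun m hm => ?_
  have h := supp_deg hg hm
  rw [eval_monomial_two, eval_monomial_two]
  simp only [Pi.smul_apply, smul_eq_mul, mul_pow]
  rw [← h, pow_add]; ring

lemma eval_psi (g : MvPolynomial (Fin 2) K) (c : K) :
    Polynomial.eval c (aeval ![(1 : Polynomial K), Polynomial.X] g) = eval ![1, c] g := by
  induction g using MvPolynomial.induction_on with
  | C a => simp
  | add p q hp hq => simp [hp, hq]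
  | mul_X p i hp => fin_cases i <;> simp [hp]

lemma psi_monomial (m : Fin 2 →₀ ℕ) (c : K) :
    aeval ![(1 : Polynomial K), Polynomial.X] (monomial m c)
      = Polynomial.C c * Polynomial.X ^ (m 1) := by
  rw [monomial_eq, Finsupp.prod_pow, Fin.prod_univ_two]
  simp [Polynomial.C_eq_algebraMap]

lemma psi_coeff (g : MvPolynomial (Fin 2) K) (j : ℕ) :
    (aeval ![(1 : Polynomial K), Polynomial.X] g).coeff j
      = ∑ m ∈ g.support, if j = m 1 then coeff m g else 0 := by
  conv_lhs => rw [g.as_sum, map_sum]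
  rw [Polynomial.finset_sum_coeff]
  refine Finset.sum_congr rfl fun m _ => ?_
  rw [psi_monomial, Polynomial.coeff_C_mul, Polynomial.coeff_X_pow, mul_ite, mul_one, mul_zero]

lemma natDegree_psi_le {g : MvPolynomial (Fin 2) K} {d : ℕ} (hg : g.IsHomogeneous d) :
    (aeval ![(1 : Polynomial K), Polynomial.X] g).natDegree ≤ d := by
  rw [Polynomial.natDegree_le_iff_coeff_eq_zero]
  intro N hN
  rw [psi_coeff]
  refine Finset.sum_eq_zero fun m hm => ?_
  have h := supp_deg hg hm
  rw [if_neg]; omega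

lemma psi_coeff_top {g : MvPolynomial (Fin 2) K} {d : ℕ} (hg : g.IsHomogeneous d)
    (h0 : eval ![(0 : K), 1] g = 0) :
    (aeval ![(1 : Polynomial K), Polynomial.X] g).coeff d = 0 := by
  rw [psi_coeff]
  have key : (∑ m ∈ g.support, if d = m 1 then coeff m g else 0) = eval ![(0 : K), 1] g := by
    conv_rhs => rw [g.as_sum, map_sum]
    refine Finset.sum_congr rfl fun m hm => ?_
    have h := supp_deg hg hm
    rw [eval_monomial, Finsupp.prod_pow, Fin.prod_univ_two]
    simp only [Matrix.cons_val_zero, Matrix.cons_val_one, Matrix.head_cons, one_pow, mul_one]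
    rcases Nat.eq_zero_or_pos (m 0) with h1 | h1
    · rw [if_pos (by omega), h1, pow_zero, mul_one]
    · rw [if_neg (by omega), zero_pow (by omega), mul_zero]
  rw [key, h0]


/-- Homogenization at level `e` of a univariate polynomial. -/
noncomputable def homize (e : ℕ) : Polynomial K →ₗ[K] MvPolynomial (Fin 2) K where
  toFun Q := ∑ j ∈ Finset.range (e + 1), C (Q.coeff j) * X 0 ^ (e - j) * X 1 ^ j
  map_add' P Q := by
    simp only [Polynomial.coeff_add, map_add, add_mul, Finset.sum_add_distrib]
  map_smul' c Q := by
    simp only [Polynomial.coeff_smul, smul_eq_mul, map_mul, RingHom.id_apply, Finset.smul_sum,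
      C_mul, smul_eq_C_mul, mul_assoc]

lemma homize_apply (e : ℕ) (Q : Polynomial K) :
    homize e Q = ∑ j ∈ Finset.range (e + 1), C (Q.coeff j) * X 0 ^ (e - j) * X 1 ^ j := rfl

lemma homize_X_pow (e s : ℕ) (hs : s ≤ e) :
    homize e ((Polynomial.X : Polynomial K) ^ s) = X 0 ^ (e - s) * X 1 ^ s := by
  rw [homize_apply, Finset.sum_eq_single s]
  · simp [Polynomial.coeff_X_pow]
  · intro j _ hj
    rw [Polynomial.coeff_X_pow, if_neg hj, map_zero, zero_mul, zero_mul]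
  · intro h
    exact absurd (Finset.mem_range.mpr (by omega)) h

lemma map_homize (e : ℕ) (Q : Polynomial K) (hQ : Q.natDegree ≤ e) :
    algebraMap (MvPolynomial (Fin 2) K) (FractionRing (MvPolynomial (Fin 2) K)) (homize e Q)
      = (algebraMap (MvPolynomial (Fin 2) K) (FractionRing (MvPolynomial (Fin 2) K)) (X 0)) ^ e *
        Polynomial.eval₂
          ((algebraMap (MvPolynomial (Fin 2) K) (FractionRing (MvPolynomial (Fin 2) K))).comp
            (C : K →+* MvPolynomial (Fin 2) K))
          ((algebraMap (MvPolynomial (Fin 2) K) (FractionRing (MvPolynomial (Fin 2) K)) (X 1)) /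
            (algebraMap (MvPolynomial (Fin 2) K) (FractionRing (MvPolynomial (Fin 2) K)) (X 0))) Q := by
  set a := algebraMap (MvPolynomial (Fin 2) K) (FractionRing (MvPolynomial (Fin 2) K)) with ha
  have hT0 : a (X 0) ≠ 0 := by
    intro h
    exact MvPolynomial.X_ne_zero 0 (IsFractionRing.injective (MvPolynomial (Fin 2) K) _ (by rw [h, map_zero]))
  rw [Polynomial.eval₂_eq_sum_range' _ (lt_of_le_of_lt hQ (Nat.lt_succ_self e)), homize_apply,
    map_sum, Finset.mul_sum]
  refine Finset.sum_congr rfl fun j hj => ?_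
  have hje : j ≤ e := by simpa using Nat.lt_succ_iff.mp (Finset.mem_range.mp hj)
  rw [map_mul, map_mul, map_pow, map_pow, RingHom.comp_apply]
  rw [div_pow, pow_sub₀ _ hT0 hje]
  field_simp


lemma homize_psi {g : MvPolynomial (Fin 2) K} {d : ℕ} (hg : g.IsHomogeneous d) :
    homize d (aeval ![(1 : Polynomial K), Polynomial.X] g) = g := by
  conv_lhs => rw [g.as_sum]
  rw [map_sum, map_sum]
  conv_rhs => rw [g.as_sum]
  refine Finset.sum_congr rfl fun m hm => ?_
  have h := supp_deg hg hm
  rw [psi_monomial, homize_apply, Finset.sum_eq_single (m 1)]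
  · rw [Polynomial.coeff_C_mul, Polynomial.coeff_X_pow, if_pos rfl, mul_one]
    rw [monomial_eq, Finsupp.prod_pow, Fin.prod_univ_two]
    have : d - m 1 = m 0 := by omega
    rw [this, mul_assoc]
  · intro j _ hj
    rw [Polynomial.coeff_C_mul, Polynomial.coeff_X_pow, if_neg (by omega), mul_zero, map_zero,
      zero_mul, zero_mul]
  · intro hmem
    exact absurd (Finset.mem_range.mpr (by omega)) hmem

lemma homize_mul (e1 e2 : ℕ) (P Q : Polynomial K) (hP : P.natDegree ≤ e1) (hQ : Q.natDegree ≤ e2) :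
    homize (e1 + e2) (P * Q) = homize e1 P * homize e2 Q := by
  apply IsFractionRing.injective (MvPolynomial (Fin 2) K) (FractionRing (MvPolynomial (Fin 2) K))
  rw [map_mul (algebraMap (MvPolynomial (Fin 2) K) (FractionRing (MvPolynomial (Fin 2) K))),
    map_homize _ _ (le_trans (Polynomial.natDegree_mul_le) (add_le_add hP hQ)),
    map_homize _ _ hP, map_homize _ _ hQ, Polynomial.eval₂_mul, pow_add]
  ring


lemma finset_val_le_roots {p : Polynomial K} (hp : p ≠ 0) (s : Finset K)
    (h : ∀ c ∈ s, p.eval c = 0) : s.val ≤ p.roots := by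
  classical
  rw [Multiset.le_iff_count]
  intro c
  by_cases hc : c ∈ s
  · have : Multiset.count c s.val = 1 := by
      exact Multiset.count_eq_one_of_mem s.nodup hc
    rw [this, Polynomial.count_roots]
    exact (Polynomial.rootMultiplicity_pos hp).mpr (h c hc)
  · rw [Multiset.count_eq_zero_of_notMem hc]
    exact Nat.zero_le _

lemma prod_X_sub_C_dvd_of_roots {p : Polynomial K} (hp : p ≠ 0) (s : Finset K)
    (h : ∀ c ∈ s, p.eval c = 0) : (∏ c ∈ s, (Polynomial.X - Polynomial.C c)) ∣ p := by
  rw [Finset.prod_eq_multiset_prod]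
  exact (Multiset.prod_X_sub_C_dvd_iff_le_roots hp s.val).mpr (finset_val_le_roots hp s h)

lemma prod_eq_X_pow_sub_one {r : ℕ} (hr : r ≠ 0) (s : Finset K) (hcard : s.card = r)
    (h : ∀ c ∈ s, c ^ r = 1) :
    (∏ c ∈ s, (Polynomial.X - Polynomial.C c)) = Polynomial.X ^ r - 1 := by
  have h1 : (Polynomial.X ^ r - 1 : Polynomial K) = Polynomial.X ^ r - Polynomial.C 1 := by
    rw [map_one]
  have hmon : (Polynomial.X ^ r - 1 : Polynomial K).Monic := by
    rw [h1]; exact Polynomial.monic_X_pow_sub_C 1 hr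
  have hp : (Polynomial.X ^ r - 1 : Polynomial K) ≠ 0 := hmon.ne_zero
  have hdvd : (∏ c ∈ s, (Polynomial.X - Polynomial.C c)) ∣ (Polynomial.X ^ r - 1 : Polynomial K) :=
    prod_X_sub_C_dvd_of_roots hp s (fun c hc => by
      simp [h c hc])
  have hmon2 : (∏ c ∈ s, (Polynomial.X - Polynomial.C c)).Monic :=
    Polynomial.monic_prod_of_monic _ _ fun c _ => Polynomial.monic_X_sub_C c
  have hdeg : (∏ c ∈ s, (Polynomial.X - Polynomial.C c)).natDegree = r := by
    rw [Polynomial.natDegree_prod _ _ fun c _ => (Polynomial.monic_X_sub_C c).ne_zero]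
    simp [hcard]
  apply Polynomial.eq_of_dvd_of_natDegree_le_of_leadingCoeff hdvd
  · rw [hdeg, h1, Polynomial.natDegree_X_pow_sub_C]
  · rw [hmon2.leadingCoeff, hmon.leadingCoeff]


lemma main_dvd {r : ℕ} (hr0 : r ≠ 0) (H' : Finset K) (hcard : H'.card = r)
    (hroots : ∀ c ∈ H', c ^ r = 1) {g : MvPolynomial (Fin 2) K} {d : ℕ}
    (hg : g.IsHomogeneous d) (h10 : eval ![(1 : K), 0] g = 0) (h01 : eval ![(0 : K), 1] g = 0)
    (hc : ∀ c ∈ H', eval ![(1 : K), c] g = 0) :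
    (X 0 ^ (r + 1) * X 1 - X 0 * X 1 ^ (r + 1) : MvPolynomial (Fin 2) K) ∣ g := by
  set P := aeval ![(1 : Polynomial K), Polynomial.X] g with hPdef
  have hgP : homize d P = g := homize_psi hg
  by_cases hP : P = 0
  · rw [← hgP, hP, map_zero]
    exact dvd_zero _
  -- X ∣ P
  have hX : Polynomial.X ∣ P := by
    rw [Polynomial.X_dvd_iff, Polynomial.coeff_zero_eq_eval_zero, hPdef, eval_psi, h10]
  -- (X^r - 1) ∣ P
  have hXr : (Polynomial.X ^ r - 1 : Polynomial K) ∣ P := by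
    rw [← prod_eq_X_pow_sub_one hr0 H' hcard hroots]
    exact prod_X_sub_C_dvd_of_roots hP H' (fun c hcmem => by rw [hPdef, eval_psi, hc c hcmem])
  have hpow : (Polynomial.X : Polynomial K) ^ (r - 1) * Polynomial.X = Polynomial.X ^ r := by
    rw [← pow_succ]; congr 1; omega
  have hcop : IsCoprime (Polynomial.X : Polynomial K) (Polynomial.X ^ r - 1) :=
    ⟨Polynomial.X ^ (r - 1), -1, by rw [hpow]; ring⟩
  have hdvd : (Polynomial.X ^ (r + 1) - Polynomial.X : Polynomial K) ∣ P := by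
    have h2 := hcop.mul_dvd hX hXr
    have : (Polynomial.X * (Polynomial.X ^ r - 1) : Polynomial K)
        = Polynomial.X ^ (r + 1) - Polynomial.X := by ring
    rwa [this] at h2
  obtain ⟨Q, hPQ⟩ := hdvd
  have hQ0 : Q ≠ 0 := by rintro rfl; rw [mul_zero] at hPQ; exact hP hPQ
  have hF0 : (Polynomial.X ^ (r + 1) - Polynomial.X : Polynomial K) ≠ 0 := by
    intro h; rw [h, zero_mul] at hPQ; exact hP hPQ
  have ndF : (Polynomial.X ^ (r + 1) - Polynomial.X : Polynomial K).natDegree = r + 1 := by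
    rw [Polynomial.natDegree_sub_eq_left_of_natDegree_lt]
    · rw [Polynomial.natDegree_X_pow]
    · rw [Polynomial.natDegree_X_pow, Polynomial.natDegree_X]
      omega
  have ndP_le : P.natDegree ≤ d := natDegree_psi_le hg
  have ndP_ne : P.natDegree ≠ d := by
    intro h
    apply hP
    rw [← Polynomial.leadingCoeff_eq_zero, Polynomial.leadingCoeff, h]
    exact psi_coeff_top hg h01
  have hPn : P.natDegree = (r + 1) + Q.natDegree := by
    rw [hPQ, Polynomial.natDegree_mul hF0 hQ0, ndF]
  set e := d - (r + 2) with he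
  have hd : d = (r + 2) + e := by omega
  have hsplit : homize d P
      = homize (r + 2) (Polynomial.X ^ (r + 1) - Polynomial.X) * homize e Q := by
    rw [hd, hPQ]
    exact homize_mul (r + 2) e _ Q (by omega) (by omega)
  have hX1 : homize (r + 2) (Polynomial.X : Polynomial K) = X 0 ^ (r + 1) * X 1 := by
    rw [← pow_one (Polynomial.X : Polynomial K), homize_X_pow (r + 2) 1 (by omega)]
    have h2 : r + 2 - 1 = r + 1 := by omega
    rw [h2, pow_one]
  have hf2 : homize (r + 2) ((Polynomial.X : Polynomial K) ^ (r + 1) - Polynomial.X)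
      = X 0 * X 1 ^ (r + 1) - X 0 ^ (r + 1) * X 1 := by
    rw [map_sub, homize_X_pow (r + 2) (r + 1) (by omega), hX1]
    have h3 : r + 2 - (r + 1) = 1 := by omega
    rw [h3, pow_one]
  refine ⟨-(homize e Q), ?_⟩
  rw [← hgP, hsplit, hf2]
  ring


end Stmt14Aux

open Stmt14Aux

/-- Let `β` be a generator of the cyclic group `F_q^*`, `k ∈ ℕ`, and `r = ord(β^k)`.
Let `X ⊆ ℙ¹` be the set parameterized by the monomials `y_1^{q-1}` and `y_2^{q-1}y_3^k`.
Then `I(X) = (t_1^{r+1}t_2 - t_1t_2^{r+1})`, and `r` divides `q - 1`. -/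
theorem stmt14 {K : Type} [Field K] [Fintype K] (β : Kˣ)
    (hβ : ∀ u : Kˣ, u ∈ Subgroup.zpowers β) (k : ℕ) (r : ℕ) (hr : r = orderOf (β ^ k)) :
    r ∣ Fintype.card K - 1 ∧
    vanishIdeal (paramSet (K := K)
        ![![Fintype.card K - 1, 0, 0], ![0, Fintype.card K - 1, k]]) =
      Ideal.span {X 0 ^ (r + 1) * X 1 - X 0 * X 1 ^ (r + 1)} := by
  classical
  have hq2 : 1 < Fintype.card K := Fintype.one_lt_card
  have hq1 : Fintype.card K - 1 ≠ 0 := by omega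
  refine ⟨by rw [hr, ← Fintype.card_units]; exact orderOf_dvd_card, ?_⟩
  set v : Fin 2 → Fin 3 → ℕ := ![![Fintype.card K - 1, 0, 0], ![0, Fintype.card K - 1, k]]
    with hv
  have hr0 : r ≠ 0 := by rw [hr]; exact (orderOf_pos (β ^ k)).ne'
  -- commuting powers of β
  have hcomm : ∀ m : ℤ, (β ^ k) ^ m = (β ^ m) ^ k := fun m => by
    rw [← zpow_natCast β k, ← zpow_mul, mul_comm, zpow_mul, zpow_natCast]
  have hunit : ∀ ε : Kˣ, (ε ^ k) ^ r = 1 := by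
    intro ε
    obtain ⟨m, rfl⟩ := Subgroup.mem_zpowers_iff.mp (hβ ε)
    rw [← hcomm, ← zpow_natCast ((β ^ k) ^ m) r, ← zpow_mul, mul_comm, zpow_mul, zpow_natCast,
      hr, pow_orderOf_eq_one, one_zpow]
  have hunitK : ∀ ε : Kˣ, ((ε : K) ^ k) ^ r = 1 := by
    intro ε
    have := hunit ε
    rw [← Units.val_pow_eq_pow_val, ← Units.val_pow_eq_pow_val, this, Units.val_one]
  -- monEval components
  have hw0 : ∀ x : Fin 3 → K, monEval v x 0 = x 0 ^ (Fintype.card K - 1) := by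
    intro x; simp [monEval, Fin.prod_univ_three, hv]
  have hw1 : ∀ x : Fin 3 → K, monEval v x 1 = x 1 ^ (Fintype.card K - 1) * x 2 ^ k := by
    intro x; simp [monEval, Fin.prod_univ_three, hv]
  have hm1 : monEval v (![1, 0, 0] : Fin 3 → K) = ![1, 0] := by
    funext i
    fin_cases i
    · simpa using hw0 (![1, 0, 0] : Fin 3 → K)
    · simpa [zero_pow hq1] using hw1 (![1, 0, 0] : Fin 3 → K)
  have hm2 : monEval v (![0, 1, 1] : Fin 3 → K) = ![0, 1] := by
    funext i
    fin_cases i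
    · simpa [zero_pow hq1] using hw0 (![0, 1, 1] : Fin 3 → K)
    · simpa using hw1 (![0, 1, 1] : Fin 3 → K)
  have hm3 : ∀ ε : Kˣ, monEval v ![1, 1, (ε : K)] = ![1, (ε : K) ^ k] := by
    intro ε
    funext i
    fin_cases i
    · simpa using hw0 ![1, 1, (ε : K)]
    · simpa using hw1 ![1, 1, (ε : K)]
  -- vanishing at representatives implies vanishing at the monomial vector
  have hvanish : ∀ {g : MvPolynomial (Fin 2) K} {d : ℕ}, g.IsHomogeneous d →
      (∀ p ∈ paramSet v, eval p.rep g = 0) →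
      ∀ (x : Fin 3 → K) (hx : monEval v x ≠ 0), eval (monEval v x) g = 0 := by
    intro g d hg hvan x hx
    obtain ⟨a, ha⟩ := Projectivization.exists_smul_eq_mk_rep K (monEval v x) hx
    have hmem : Projectivization.mk K (monEval v x) hx ∈ paramSet v := ⟨x, hx, rfl⟩
    have h2 := hvan _ hmem
    rw [← ha, Units.smul_def, eval_smul_homog hg] at h2
    rcases mul_eq_zero.mp h2 with h3 | h3
    · exact absurd h3 (pow_ne_zero _ a.ne_zero)
    · exact h3
  apply le_antisymm
  · -- vanishIdeal ≤ span {f}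
    rw [vanishIdeal, Ideal.span_le]
    rintro g ⟨⟨d, hg⟩, hvan⟩
    rw [SetLike.mem_coe, Ideal.mem_span_singleton]
    have e10 : eval ![(1 : K), 0] g = 0 := by
      have hx : monEval v ![(1 : K), 0, 0] ≠ 0 := by
        rw [hm1]; intro h; simpa using congrFun h 0
      have := hvanish hg hvan _ hx
      rwa [hm1] at this
    have e01 : eval ![(0 : K), 1] g = 0 := by
      have hx : monEval v ![(0 : K), 1, 1] ≠ 0 := by
        rw [hm2]; intro h; simpa using congrFun h 1
      have := hvanish hg hvan _ hx
      rwa [hm2] at this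
    have eC : ∀ ε : Kˣ, eval ![(1 : K), (ε : K) ^ k] g = 0 := by
      intro ε
      have hx : monEval v ![(1 : K), 1, (ε : K)] ≠ 0 := by
        rw [hm3]; intro h; simpa using congrFun h 0
      have := hvanish hg hvan _ hx
      rwa [hm3] at this
    set H' : Finset K :=
      Finset.image (fun gG : Subgroup.zpowers (β ^ k) => ((gG : Kˣ) : K)) Finset.univ with hH
    have hinj : Function.Injective (fun gG : Subgroup.zpowers (β ^ k) => ((gG : Kˣ) : K)) := by
      intro a b h
      exact Subtype.ext (Units.ext h)
    have hcard : H'.card = r := by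
      rw [hH, Finset.card_image_of_injective _ hinj, Finset.card_univ, Fintype.card_zpowers, hr]
    have hmemH : ∀ c ∈ H', ∃ ε : Kˣ, c = (ε : K) ^ k := by
      intro c hc
      obtain ⟨gG, _, rfl⟩ := Finset.mem_image.mp hc
      obtain ⟨m, hm⟩ := Subgroup.mem_zpowers_iff.mp gG.2
      refine ⟨β ^ m, ?_⟩
      rw [← Units.val_pow_eq_pow_val, ← hcomm, hm]
    have hroots : ∀ c ∈ H', c ^ r = 1 := by
      intro c hc
      obtain ⟨ε, rfl⟩ := hmemH c hc
      exact hunitK ε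
    have hcP : ∀ c ∈ H', eval ![(1 : K), c] g = 0 := by
      intro c hc
      obtain ⟨ε, rfl⟩ := hmemH c hc
      exact eC ε
    exact main_dvd hr0 H' hcard hroots hg e10 e01 hcP
  · -- span {f} ≤ vanishIdeal
    unfold vanishIdeal
    apply Ideal.span_mono
    rw [Set.singleton_subset_iff]
    have hfhom : (X 0 ^ (r + 1) * X 1 - X 0 * X 1 ^ (r + 1) : MvPolynomial (Fin 2) K).IsHomogeneous
        (r + 2) := by
      have h1 := ((isHomogeneous_X K (0 : Fin 2)).pow (r + 1)).mul (isHomogeneous_X K 1)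
      have h2 := (isHomogeneous_X K (0 : Fin 2)).mul ((isHomogeneous_X K (1 : Fin 2)).pow (r + 1))
      rw [one_mul] at h1 h2
      have h3 : 1 + (r + 1) = r + 2 := by omega
      have h4 : r + 1 + 1 = r + 2 := by omega
      rw [h3] at h2; rw [h4] at h1
      exact h1.sub h2
    refine ⟨⟨r + 2, hfhom⟩, ?_⟩
    rintro p ⟨x, hx, rfl⟩
    obtain ⟨a, ha⟩ := Projectivization.exists_smul_eq_mk_rep K (monEval v x) hx
    rw [← ha, Units.smul_def, eval_smul_homog hfhom]
    suffices h : eval (monEval v x) (X 0 ^ (r + 1) * X 1 - X 0 * X 1 ^ (r + 1)) = 0 by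
      rw [h, mul_zero]
    set w := monEval v x with hwdef
    have hev : eval w (X 0 ^ (r + 1) * X 1 - X 0 * X 1 ^ (r + 1) : MvPolynomial (Fin 2) K)
        = w 0 ^ (r + 1) * w 1 - w 0 * w 1 ^ (r + 1) := by
      simp
    rw [hev]
    -- key claims: w 0 ∈ {0, 1} and w 1 ^ (r+1) = w 1 when w 0 = 1
    by_cases hx0 : x 0 = 0
    · have h0 : w 0 = 0 := by rw [hwdef, hw0, hx0, zero_pow hq1]
      rw [h0, zero_pow (by omega : r + 1 ≠ 0), zero_mul, zero_mul, sub_zero]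
    · have h0 : w 0 = 1 := by rw [hwdef, hw0]; exact FiniteField.pow_card_sub_one_eq_one _ hx0
      rw [h0, one_pow, one_mul, one_mul]
      have hcl : w 1 ^ (r + 1) = w 1 := by
        by_cases hx1 : x 1 = 0
        · have h1 : w 1 = 0 := by rw [hwdef, hw1, hx1, zero_pow hq1, zero_mul]
          rw [h1, zero_pow (by omega : r + 1 ≠ 0)]
        · have h1 : w 1 = x 2 ^ k := by
            rw [hwdef, hw1, FiniteField.pow_card_sub_one_eq_one _ hx1, one_mul]
          by_cases hx2 : x 2 = 0
          · rcases Nat.eq_zero_or_pos k with hk | hk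
            · rw [h1, hx2, hk, pow_zero, one_pow]
            · rw [h1, hx2, zero_pow (by omega : k ≠ 0), zero_pow (by omega : r + 1 ≠ 0)]
          · have hu := hunitK (Units.mk0 (x 2) hx2)
            rw [Units.val_mk0] at hu
            rw [h1, pow_succ, hu, one_mul]
      rw [hcl, sub_self]
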